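/- In a star-regular category C, the following are equivalent: (i) C satisfies property (*) — for any kernel star F* ⇉ A with coequaliser f : A → A/F* and any kernel star G* ⇉ A with F* ⊆ G*, the image f(G*) ⇉ A/F* is again a kernel star; (ii) every regular diamond with identity right edge (g = q∘f with f, g, q regular epimorphisms) is left saturated. -/

import Mathlib

open CategoryTheory CategoryTheory.Limits

universe v u

namespace StarReg

variable {C : Type u} [Category.{v} C]

/-- An ideal of morphisms in the sense of Ehresmann. -/
def IsIdealClass (N : MorphismProperty C) : Prop :=
  (∀ ⦃X Y Z : C⦄ (f : X ⟶ Y) (g : Y ⟶ Z), N f → N (f ≫ g)) ∧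
  (∀ ⦃X Y Z : C⦄ (f : X ⟶ Y) (g : Y ⟶ Z), N g → N (f ≫ g))

/-- `k` is an `N`-kernel of `f`. -/
def IsNKernel (N : MorphismProperty C) {K X Y : C} (k : K ⟶ X) (f : X ⟶ Y) : Prop :=
  N (k ≫ f) ∧ ∀ ⦃L : C⦄ (g : L ⟶ X), N (g ≫ f) → ∃! μ : L ⟶ K, μ ≫ k = g

def HasNKernels (N : MorphismProperty C) : Prop :=
  ∀ ⦃X Y : C⦄ (f : X ⟶ Y), ∃ (K : C) (k : K ⟶ X), IsNKernel N k f

/-- Every morphism factors as a regular epimorphism followed by a monomorphism. -/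
def RegEpiMonoFactorisations (C : Type u) [Category.{v} C] : Prop :=
  ∀ ⦃X Y : C⦄ (f : X ⟶ Y), ∃ (Z : C) (e : X ⟶ Z) (m : Z ⟶ Y),
    Nonempty (RegularEpi e) ∧ Mono m ∧ e ≫ m = f

/-- Regular epimorphisms are stable under pullback. -/
def RegEpisPullbackStable (C : Type u) [Category.{v} C] : Prop :=
  ∀ ⦃P X Y Z : C⦄ (fst : P ⟶ X) (snd : P ⟶ Y) (f : X ⟶ Z) (g : Y ⟶ Z),
    IsPullback fst snd f g → Nonempty (RegularEpi g) → Nonempty (RegularEpi fst)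

/-- A star: a pair of parallel morphisms whose first component lies in `N`. -/
structure Star (N : MorphismProperty C) (X : C) where
  T : C
  a : T ⟶ X
  b : T ⟶ X
  ha : N a

/-- A monic star: the pair is jointly monomorphic. -/
def Star.Monic {N : MorphismProperty C} {X : C} (s : Star N X) : Prop :=
  ∀ ⦃W : C⦄ (u v : W ⟶ s.T), u ≫ s.a = v ≫ s.a → u ≫ s.b = v ≫ s.b → u = v

/-- `s` is the kernel star of `f`. -/
def IsKernelStar {N : MorphismProperty C} {X Y : C} (f : X ⟶ Y) (s : Star N X) : Prop :=
  s.a ≫ f = s.b ≫ f ∧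
  ∀ t : Star N X, t.a ≫ f = t.b ≫ f →
    ∃! u : t.T ⟶ s.T, u ≫ s.a = t.a ∧ u ≫ s.b = t.b

/-- `t` is the (regular epi, monic star) image of the star `s` along `f`. -/
def IsImageFact {N : MorphismProperty C} {X Y : C} (f : X ⟶ Y) (s : Star N X)
    (t : Star N Y) : Prop :=
  t.Monic ∧ ∃ e : s.T ⟶ t.T,
    Nonempty (RegularEpi e) ∧ e ≫ t.a = s.a ≫ f ∧ e ≫ t.b = s.b ≫ f

/-- `f` is a coequaliser of the star `s`. -/
def IsStarCoequalizer {N : MorphismProperty C} {X Q : C} (s : Star N X) (f : X ⟶ Q) : Prop :=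
  s.a ≫ f = s.b ≫ f ∧
  ∀ ⦃W : C⦄ (h : X ⟶ W), s.a ≫ h = s.b ≫ h → ∃! u : Q ⟶ W, f ≫ u = h

/-- `s` is the star `Δ*_X` of the discrete relation on `X`. -/
def IsDeltaStar {N : MorphismProperty C} {X : C} (s : Star N X) : Prop :=
  s.a = s.b ∧ IsNKernel N s.a (𝟙 X)

def RegEpisAreStarCoequalizers (N : MorphismProperty C) : Prop :=
  ∀ ⦃X Y : C⦄ (f : X ⟶ Y), Nonempty (RegularEpi f) →
    ∃ s : Star N X, IsStarCoequalizer s f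

/-- A star-regular category: regular multi-pointed with `N`-kernels, every regular
epimorphism a coequaliser of a star. -/
def StarRegular (N : MorphismProperty C) : Prop :=
  IsIdealClass N ∧ HasNKernels N ∧ RegEpiMonoFactorisations C ∧
    RegEpisPullbackStable C ∧ RegEpisAreStarCoequalizers N

def HasKernelStarCoequalizers (N : MorphismProperty C) : Prop :=
  ∀ ⦃X Y : C⦄ (f : X ⟶ Y) (s : Star N X), IsKernelStar f s →
    ∃ (Q : C) (q : X ⟶ Q), IsStarCoequalizer s q

/-- `f` is saturating: the image of `Δ*` along `f` is `Δ*`. -/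
def Saturating (N : MorphismProperty C) {X Y : C} (f : X ⟶ Y) : Prop :=
  ∀ (s : Star N X) (t : Star N Y), IsDeltaStar s → IsImageFact f s t → IsDeltaStar t

/-- The diamond `e ≫ g = f ≫ h` is right saturated: `f(E*) = H*`. -/
def RightSaturated (N : MorphismProperty C) {X Y Z W : C}
    (e : X ⟶ Z) (f : X ⟶ Y) (_g : Z ⟶ W) (h : Y ⟶ W) : Prop :=
  ∀ (s : Star N X) (t : Star N Y), IsKernelStar e s → IsImageFact f s t → IsKernelStar h t

/-- The diamond `e ≫ g = f ≫ h` is left saturated: `e(F*) = G*`. -/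
def LeftSaturated (N : MorphismProperty C) {X Y Z W : C}
    (e : X ⟶ Z) (f : X ⟶ Y) (g : Z ⟶ W) (_h : Y ⟶ W) : Prop :=
  ∀ (s : Star N X) (t : Star N Z), IsKernelStar f s → IsImageFact e s t → IsKernelStar g t

/-- `s` is a kernel star (of some morphism). -/
def IsAKernelStar {N : MorphismProperty C} {X : C} (s : Star N X) : Prop :=
  ∃ (W : C) (w : X ⟶ W), IsKernelStar w s

/-- Inclusion of stars on the same object. -/
def StarLE {N : MorphismProperty C} {X : C} (s t : Star N X) : Prop :=
  ∃ m : s.T ⟶ t.T, m ≫ t.a = s.a ∧ m ≫ t.b = s.b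

/-- Property (*): images along coequalisers of smaller kernel stars of kernel stars are
kernel stars. -/
def PropertyStar (N : MorphismProperty C) : Prop :=
  ∀ ⦃A Q : C⦄ (F G : Star N A) (f : A ⟶ Q),
    IsKernelStar f F → IsStarCoequalizer F f → IsAKernelStar G → StarLE F G →
    ∀ t : Star N Q, IsImageFact f G t → IsAKernelStar t

/-- `σ` (with comparison `j`) is the star-pullback of `τ` along `g`. -/
def IsStarPullback {N : MorphismProperty C} {X Y : C} (g : X ⟶ Y) (τ : Star N Y)
    (σ : Star N X) (j : σ.T ⟶ τ.T) : Prop :=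
  σ.a ≫ g = j ≫ τ.a ∧ σ.b ≫ g = j ≫ τ.b ∧
  ∀ (ρ : Star N X) (w : ρ.T ⟶ τ.T), ρ.a ≫ g = w ≫ τ.a → ρ.b ≫ g = w ≫ τ.b →
    ∃! h : ρ.T ⟶ σ.T, h ≫ σ.a = ρ.a ∧ h ≫ σ.b = ρ.b ∧ h ≫ j = w

def HasRegEpiPushouts (C : Type u) [Category.{v} C] : Prop :=
  ∀ ⦃X Y Z : C⦄ (f : X ⟶ Y) (g : X ⟶ Z), Nonempty (RegularEpi f) → Nonempty (RegularEpi g) →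
    ∃ (W : C) (p : Y ⟶ W) (q : Z ⟶ W), IsPushout f g p q

end StarReg


namespace StarReg

variable {C : Type u} [Category.{v} C] {N : MorphismProperty C}

lemma epi_of_nonempty_regularEpi {X Y : C} {f : X ⟶ Y} (h : Nonempty (RegularEpi f)) :
    Epi f := by
  obtain ⟨re⟩ := h
  exact RegularEpi.epi f re

lemma regularEpi_of_isStarCoequalizer {X Q : C} {s : Star N X} {f : X ⟶ Q}
    (h : IsStarCoequalizer s f) : Nonempty (RegularEpi f) :=
  ⟨{ W := s.T, left := s.a, right := s.b, w := h.1,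
     isColimit := Cofork.IsColimit.ofExistsUnique fun sc => by
       simpa using h.2 sc.π sc.condition }⟩

/-- Universal property of a regular epi as an existence-uniqueness statement. -/
lemma regularEpi_existsUnique {X Y : C} {f : X ⟶ Y} (re : RegularEpi f) {W : C}
    (h : X ⟶ W) (hw : re.left ≫ h = re.right ≫ h) : ∃! u : Y ⟶ W, f ≫ u = h := by
  simpa using Cofork.IsColimit.existsUnique re.isColimit h hw

lemma nonempty_regularEpi_of_comp_iso {X Y Z : C} {e : X ⟶ Y} {m : Y ⟶ Z} (re : RegularEpi e)
    [IsIso m] {v : X ⟶ Z} (hv : e ≫ m = v) : Nonempty (RegularEpi v) := by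
  have hw : re.left ≫ v = re.right ≫ v := by
    rw [← hv, ← Category.assoc, ← Category.assoc, re.w]
  refine ⟨⟨re.W, re.left, re.right, hw, Cofork.IsColimit.ofExistsUnique fun sc => ?_⟩⟩
  obtain ⟨d, hd, hdu⟩ := Cofork.IsColimit.existsUnique re.isColimit sc.π sc.condition
  simp only [Cofork.π_ofπ] at hd ⊢
  refine ⟨inv m ≫ d, ?_, fun y hy => ?_⟩
  · show v ≫ (inv m ≫ d) = sc.π
    rw [← hv, Category.assoc, IsIso.hom_inv_id_assoc, hd]
  · have h2 : e ≫ (m ≫ y) = sc.π := by rw [← Category.assoc, hv]; exact hy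
    rw [← hdu (m ≫ y) (by simpa using h2), IsIso.inv_hom_id_assoc]

/-- Every morphism has a kernel star. -/
lemma exists_kernelStar [HasPullbacks C] (hNK : HasNKernels N) {X Y : C} (e : X ⟶ Y) :
    ∃ s : Star N X, IsKernelStar e s := by
  obtain ⟨K, k, hk1, hk2⟩ := hNK (pullback.fst e e)
  refine ⟨⟨K, k ≫ pullback.fst e e, k ≫ pullback.snd e e, hk1⟩, ?_, ?_⟩
  · simp [pullback.condition]
  · intro t ht
    have hlift : N (pullback.lift t.a t.b ht ≫ pullback.fst e e) := by
      simpa [pullback.lift_fst] using t.ha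
    obtain ⟨μ, hμ, hμu⟩ := hk2 _ hlift
    refine ⟨μ, ⟨?_, ?_⟩, fun y hy => ?_⟩
    · rw [← Category.assoc, hμ]; simp [pullback.lift_fst]
    · rw [← Category.assoc, hμ]; simp [pullback.lift_snd]
    · refine hμu y (pullback.hom_ext ?_ ?_)
      · simpa [pullback.lift_fst] using hy.1
      · simpa [pullback.lift_snd] using hy.2

/-- A regular epi is the star coequalizer of its kernel star. -/
lemma isStarCoequalizer_of_kernelStar (hsc : RegEpisAreStarCoequalizers N)
    {X Y : C} {f : X ⟶ Y} (hre : Nonempty (RegularEpi f)) {s : Star N X}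
    (hs : IsKernelStar f s) : IsStarCoequalizer s f := by
  obtain ⟨s0, h0⟩ := hsc f hre
  obtain ⟨u, ⟨hu1, hu2⟩, -⟩ := hs.2 s0 h0.1
  refine ⟨hs.1, fun W h hh => h0.2 h ?_⟩
  rw [← hu1, ← hu2, Category.assoc, Category.assoc, hh]

/-- A kernel star is the kernel star of its own star coequalizer. -/
lemma isKernelStar_of_starCoequalizer {X W Q : C} {w : X ⟶ W} {s : Star N X}
    (hs : IsKernelStar w s) {c : X ⟶ Q} (hc : IsStarCoequalizer s c) :
    IsKernelStar c s := by
  obtain ⟨v, hv, -⟩ := hc.2 w hs.1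
  exact ⟨hc.1, fun t ht => hs.2 t (by rw [← hv, ← Category.assoc, ← Category.assoc, ht])⟩

end StarReg

open CategoryTheory CategoryTheory.Limits StarReg in
/-- In a star-regular category, property (*) holds iff every regular diamond with identity
right edge is left saturated. -/
theorem statement5 {C : Type u} [Category.{v} C] (N : MorphismProperty C)
    (hfl : HasFiniteLimits C) (hsr : StarRegular N)
    (hcoeq : HasKernelStarCoequalizers N) :
    PropertyStar N ↔
    (∀ ⦃X Y Z : C⦄ (e : X ⟶ Z) (f : X ⟶ Y) (g : Z ⟶ Y),
      Nonempty (RegularEpi e) → Nonempty (RegularEpi f) → Nonempty (RegularEpi g) →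
      e ≫ g = f → LeftSaturated N e f g (𝟙 Y)) := by
  haveI := hfl
  haveI : HasPullbacks C := inferInstance
  obtain ⟨hideal, hNK, hfact, hpbs, hsc⟩ := hsr
  constructor
  · -- Property (*) implies left saturation of such diamonds
    intro hps X Y Z e f g he hf hg hefg s t hsf hst
    obtain ⟨htm, q, hq, hqa, hqb⟩ := hst
    haveI hqe : Epi q := epi_of_nonempty_regularEpi hq
    haveI hee : Epi e := epi_of_nonempty_regularEpi he
    -- kernel star of e
    obtain ⟨E, hE⟩ := exists_kernelStar (N := N) hNK e
    have hce : IsStarCoequalizer E e := isStarCoequalizer_of_kernelStar hsc he hE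
    have hcf : IsStarCoequalizer s f := isStarCoequalizer_of_kernelStar hsc hf hsf
    -- E* ⊆ s
    have hEf : E.a ≫ f = E.b ≫ f := by
      rw [← hefg, ← Category.assoc, ← Category.assoc, hE.1]
    obtain ⟨mE, hmE, -⟩ := hsf.2 E hEf
    have hkt : IsAKernelStar t :=
      hps E s e hE hce ⟨Y, f, hsf⟩ ⟨mE, hmE.1, hmE.2⟩ t ⟨htm, q, hq, hqa, hqb⟩
    obtain ⟨W, w, hw⟩ := hkt
    obtain ⟨Qc, c, hc⟩ := hcoeq w t hw
    have hct : IsKernelStar c t := isKernelStar_of_starCoequalizer hw hc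
    -- t.a ≫ g = t.b ≫ g
    have h1 : t.a ≫ g = t.b ≫ g := by
      have : q ≫ (t.a ≫ g) = q ≫ (t.b ≫ g) := by
        rw [← Category.assoc, ← Category.assoc, hqa, hqb, Category.assoc, Category.assoc,
          hefg]
        exact hsf.1
      exact (cancel_epi q).1 this
    -- g is a star coequalizer of t
    have hg2 : IsStarCoequalizer t g := by
      refine ⟨h1, fun W' h hh => ?_⟩
      have hseh : s.a ≫ (e ≫ h) = s.b ≫ (e ≫ h) := by
        rw [← Category.assoc, ← Category.assoc, ← hqa, ← hqb, Category.assoc, Category.assoc,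
          hh]
      obtain ⟨u, hu, huu⟩ := hcf.2 (e ≫ h) hseh
      refine ⟨u, ?_, fun y hy => huu y ?_⟩
      · have : e ≫ (g ≫ u) = e ≫ h := by rw [← Category.assoc, hefg, hu]
        exact (cancel_epi e).1 this
      · have hy' : g ≫ y = h := hy
        show f ≫ y = e ≫ h
        rw [← hefg, Category.assoc, hy']
    -- conclude
    refine ⟨h1, fun r hr => ?_⟩
    obtain ⟨v, hv, -⟩ := hg2.2 c hc.1
    exact hct.2 r (by rw [← hv, ← Category.assoc, ← Category.assoc, hr])
  · -- left saturation implies Property (*)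
    intro hrhs A Q F G f hF hcF hG hle t ht
    obtain ⟨W, w, hw⟩ := hG
    obtain ⟨mFG, hm1, hm2⟩ := hle
    have href : Nonempty (RegularEpi f) := regularEpi_of_isStarCoequalizer hcF
    obtain ⟨Z', p, m, hrep, hmono, hpm⟩ := hfact w
    haveI := hmono
    -- G is the kernel star of p
    have hwp : IsKernelStar p G := by
      constructor
      · have : (G.a ≫ p) ≫ m = (G.b ≫ p) ≫ m := by
          rw [Category.assoc, Category.assoc, hpm, hw.1]
        exact (cancel_mono m).1 this
      · intro r hr
        exact hw.2 r (by rw [← hpm, ← Category.assoc, ← Category.assoc, hr])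
    have hFp : F.a ≫ p = F.b ≫ p := by
      rw [← hm1, ← hm2, Category.assoc, Category.assoc, hwp.1]
    obtain ⟨v, hv, -⟩ := hcF.2 p hFp
    -- v is a regular epi
    have hrev : Nonempty (RegularEpi v) := by
      obtain ⟨Z'', e', m2, ⟨re'⟩, hm2m, he'm⟩ := hfact v
      haveI : Mono m2 := hm2m
      obtain ⟨rp⟩ := hrep
      haveI := isRegularEpi_of_regularEpi rp
      haveI := re'
      have hcomp : (f ≫ e') ≫ m2 = p := by rw [Category.assoc, he'm, hv]
      haveI : StrongEpi ((f ≫ e') ≫ m2) := by rw [hcomp]; infer_instance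
      haveI : StrongEpi m2 := strongEpi_of_strongEpi (f ≫ e') m2
      haveI : IsIso m2 := isIso_of_mono_of_strongEpi m2
      exact nonempty_regularEpi_of_comp_iso re' he'm
    exact ⟨Z', v, hrhs f p v href hrep hrev hv G t hwp ht⟩
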